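/- Let v : B → ℝ be a C² function on a Euclidean ball B ⊂ ℝ^{2n} ≅ ℂⁿ, and let x be a point of the upper contact set of v, i.e., D²v(x) ≥ 0 (the real Hessian is positive semidefinite). Then the complex Hessian (v_{i j̄}(x)) is positive semidefinite, and det_{ℝ}(D²v(x)) ≤ 2^{2n}·(det_{ℂ}(v_{i j̄}(x)))². -/

import Mathlib

open scoped ComplexOrder
open Matrix Complex
open scoped MatrixOrder

private lemma aux_det_nonneg {m : Type*} [Fintype m] [DecidableEq m]
    {A : Matrix m m ℝ} (hA : A.PosSemidef) : 0 ≤ A.det := by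
  rw [hA.isHermitian.det_eq_prod_eigenvalues]
  exact Finset.prod_nonneg fun i _ => by simpa using hA.eigenvalues_nonneg i


lemma aux_mink {m : Type*} [Fintype m] [DecidableEq m]
    {A B : Matrix m m ℝ} (hA : A.PosSemidef) (hB : B.PosSemidef) :
    A.det * B.det ≤ ((1/2 : ℝ) • (A + B)).det ^ 2 := by
  by_cases hdA : A.det = 0
  · rw [hdA, zero_mul]; positivity
  · set R := CFC.sqrt A with hRdef
    have hRR : R * R = A := by
      have := CFC.sq_sqrt A hA.nonneg
      rwa [pow_two] at this
    have hRH : R.IsHermitian := (CFC.sqrt_nonneg A).posSemidef.1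
    have hdR : R.det ≠ 0 := by
      intro h
      apply hdA
      rw [← hRR, det_mul, h, mul_zero]
    set M := R⁻¹ * B * R⁻¹ with hMdef
    have hMpsd : M.PosSemidef := by
      have h := hB.conjTranspose_mul_mul_same R⁻¹
      rwa [conjTranspose_nonsing_inv, hRH.eq] at h
    have hRMR : R * M * R = B := by
      have h : R * (R⁻¹ * B * R⁻¹) * R = R * R⁻¹ * B * (R⁻¹ * R) := by
        simp [Matrix.mul_assoc]
      rw [hMdef, h, mul_nonsing_inv _ hdR.isUnit, nonsing_inv_mul _ hdR.isUnit, one_mul, mul_one]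
    have key : (1/2 : ℝ) • (A + B) = R * ((1/2 : ℝ) • (1 + M)) * R := by
      rw [Matrix.mul_smul, Matrix.smul_mul, mul_add, mul_one, add_mul, hRR, hRMR]
    set μ := hMpsd.isHermitian.eigenvalues with hμdef
    have hdetM : M.det = ∏ i, μ i := by
      rw [hMpsd.isHermitian.det_eq_prod_eigenvalues]; norm_num; rfl
    have hdetHalf : ((1/2 : ℝ) • (1 + M)).det = ∏ i, (1 + μ i) / 2 := by
      have hspec := hMpsd.isHermitian.spectral_theorem
      set U := (hMpsd.isHermitian.eigenvectorUnitary : Matrix m m ℝ) with hUdef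
      have hU : U * star U = 1 := (Matrix.mem_unitaryGroup_iff).mp
        hMpsd.isHermitian.eigenvectorUnitary.2
      have h1 : (1 : Matrix m m ℝ) + M
          = U * (1 + Matrix.diagonal (RCLike.ofReal ∘ μ)) * star U := by
        rw [hspec, Unitary.conjStarAlgAut_apply, mul_add, add_mul, mul_one, hU]
      have h2 : (1/2 : ℝ) • ((1 : Matrix m m ℝ) + M)
          = U * ((1/2 : ℝ) • (1 + Matrix.diagonal (RCLike.ofReal ∘ μ))) * star U := by
        rw [h1, Matrix.mul_smul, Matrix.smul_mul]
      have h3 : (1/2 : ℝ) • ((1 : Matrix m m ℝ) + Matrix.diagonal (RCLike.ofReal ∘ μ))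
          = Matrix.diagonal (fun i => (1 + μ i) / 2) := by
        ext i j
        rcases eq_or_ne i j with rfl | h
        · simp [Matrix.one_apply_eq]
          ring
        · simp [Matrix.diagonal_apply_ne _ h, Matrix.one_apply_ne h]
      rw [h2, h3, det_mul_right_comm, hU, one_mul, det_diagonal]
    have core : M.det ≤ ((1/2 : ℝ) • (1 + M)).det ^ 2 := by
      rw [hdetM, hdetHalf, ← Finset.prod_pow]
      apply Finset.prod_le_prod
      · intro i _; exact hMpsd.eigenvalues_nonneg i
      · intro i _
        have h0 : 0 ≤ μ i := hMpsd.eigenvalues_nonneg i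
        nlinarith [sq_nonneg (1 - μ i)]
    have e1 : A.det = R.det ^ 2 := by rw [← hRR, det_mul, pow_two]
    have e2 : B.det = R.det ^ 2 * M.det := by
      rw [← hRMR, det_mul, det_mul]; ring
    have e3 : ((1/2 : ℝ) • (A + B)).det = R.det ^ 2 * ((1/2 : ℝ) • (1 + M)).det := by
      rw [key, det_mul, det_mul]; ring
    rw [e1, e2, e3]
    nlinarith [mul_le_mul_of_nonneg_left core (sq_nonneg (R.det ^ 2))]

lemma aux_detblock {l : Type*} [Fintype l] [DecidableEq l] (E F : Matrix l l ℝ) :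
    (((fromBlocks E F (-F) E).det : ℝ) : ℂ)
      = (E.map (fun r => (r : ℂ)) + Complex.I • F.map (fun r => (r : ℂ))).det *
        (starRingEnd ℂ) ((E.map (fun r => (r : ℂ)) + Complex.I • F.map (fun r => (r : ℂ))).det) := by
  set E' := E.map (fun r => (r : ℂ)) with hE'
  set F' := F.map (fun r => (r : ℂ)) with hF'
  set Z := E' + Complex.I • F' with hZ
  set W := E' - Complex.I • F' with hW
  have hWZ : W = Z.map (starRingEnd ℂ) := by
    ext i j
    simp [hW, hZ, hE', hF', Matrix.map_apply, Matrix.sub_apply, Matrix.add_apply,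
      Matrix.smul_apply, Complex.conj_ofReal]
    ring
  have hdetW : W.det = (starRingEnd ℂ) Z.det := by
    rw [hWZ, ← RingHom.mapMatrix_apply, ← RingHom.map_det]
  set M' := (fromBlocks E F (-F) E).map (fun r => (r : ℂ)) with hM'
  have hMblocks : M' = fromBlocks E' F' (-F') E' := by
    rw [hM', fromBlocks_map, Matrix.fromBlocks_inj]
    refine ⟨rfl, rfl, ?_, rfl⟩
    ext i j
    simp [hF', Matrix.map_apply, Matrix.neg_apply]
  have hcast : (((fromBlocks E F (-F) E).det : ℝ) : ℂ) = M'.det := by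
    have h := RingHom.map_det Complex.ofRealHom (fromBlocks E F (-F) E)
    exact h
  set T : Matrix (l ⊕ l) (l ⊕ l) ℂ :=
    fromBlocks 1 1 (Complex.I • 1) (-(Complex.I • 1)) with hT
  have hMT : M' * T = T * fromBlocks Z 0 0 W := by
    rw [hMblocks, hT, fromBlocks_multiply, fromBlocks_multiply]
    rw [Matrix.fromBlocks_inj]
    refine ⟨?_, ?_, ?_, ?_⟩
    · simp [hZ, Matrix.mul_smul]
    · simp [hW, Matrix.mul_smul]
      abel
    · simp [hZ, Matrix.smul_mul, Matrix.mul_smul, smul_smul, Complex.I_mul_I, smul_add]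
      abel
    · simp [hW, Matrix.smul_mul, Matrix.mul_smul, smul_smul, Complex.I_mul_I, smul_sub]
  have hdetT : T.det ≠ 0 := by
    rw [hT, det_fromBlocks_one₁₁]
    have h2 : -(Complex.I • (1 : Matrix l l ℂ)) - Complex.I • 1 * 1
        = (-(2 * Complex.I)) • (1 : Matrix l l ℂ) := by
      rw [mul_one]
      ext i j
      simp [Matrix.smul_apply]
      ring
    rw [h2, det_smul, det_one, mul_one]
    apply pow_ne_zero
    simp [Complex.ext_iff]
  have hdet : M'.det * T.det = T.det * (Z.det * W.det) := by
    rw [← det_mul, hMT, det_mul, det_fromBlocks_zero₂₁]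
  rw [hcast, ← hdetW]
  apply mul_left_cancel₀ hdetT
  rw [← hdet]; ring

lemma aux_cpsd {n : ℕ} (H : Matrix (Fin n ⊕ Fin n) (Fin n ⊕ Fin n) ℝ) (hpos : H.PosSemidef)
    (C : Matrix (Fin n) (Fin n) ℂ)
    (hC : ∀ j k : Fin n, C j k = (1 / 4 : ℂ) *
      (((H (Sum.inl j) (Sum.inl k) + H (Sum.inr j) (Sum.inr k) : ℝ) : ℂ) +
        Complex.I * (((H (Sum.inl j) (Sum.inr k) : ℝ) : ℂ) -
          ((H (Sum.inr j) (Sum.inl k) : ℝ) : ℂ)))) : C.PosSemidef := by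
  set H' : Matrix (Fin n ⊕ Fin n) (Fin n ⊕ Fin n) ℂ := H.map (fun r => (r : ℂ)) with hH'
  have hH'psd : H'.PosSemidef := by
    obtain ⟨K, hK⟩ := CStarAlgebra.nonneg_iff_eq_star_mul_self.mp hpos.nonneg
    rw [Matrix.star_eq_conjTranspose] at hK
    have h : H' = (K.map (fun r => (r : ℂ)))ᴴ * (K.map fun r => (r : ℂ)) := by
      ext i j
      simp [hH', hK, Matrix.mul_apply, Matrix.map_apply, Matrix.conjTranspose_apply,
        Complex.conj_ofReal]
    rw [h]
    exact posSemidef_conjTranspose_mul_self _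
  set A' := (H.toBlocks₁₁).map (fun r => (r : ℂ)) with hA'
  set B' := (H.toBlocks₁₂).map (fun r => (r : ℂ)) with hB'
  set C' := (H.toBlocks₂₁).map (fun r => (r : ℂ)) with hC'
  set D' := (H.toBlocks₂₂).map (fun r => (r : ℂ)) with hD'
  have hHb : H' = fromBlocks A' B' C' D' := by
    rw [hH', ← fromBlocks_toBlocks H, fromBlocks_map]
  set Q : Matrix (Fin n ⊕ Fin n) (Fin n ⊕ Fin n) ℂ :=
    fromBlocks 1 0 (Complex.I • 1) 1 with hQ
  set N := (Qᴴ * H' * Q).submatrix Sum.inl Sum.inl with hN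
  have hNpsd : N.PosSemidef := (hH'psd.conjTranspose_mul_mul_same Q).submatrix Sum.inl
  have hQHQ : Qᴴ * H' * Q
      = fromBlocks (A' + D' + Complex.I • B' - Complex.I • C') (B' - Complex.I • D')
          (C' + Complex.I • D') D' := by
    rw [hHb, hQ, fromBlocks_conjTranspose, fromBlocks_multiply, fromBlocks_multiply,
      Matrix.fromBlocks_inj]
    refine ⟨?_, ?_, ?_, ?_⟩
    · simp [Matrix.smul_mul, Matrix.mul_smul, smul_smul, Complex.I_mul_I, smul_sub, smul_add]
      abel
    · simp [Matrix.smul_mul, Matrix.mul_smul]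
      abel
    · simp [Matrix.smul_mul, Matrix.mul_smul]
    · simp
  have hNentry : ∀ j k, N j k
      = A' j k + D' j k + Complex.I * B' j k - Complex.I * C' j k := by
    intro j k
    rw [hN, Matrix.submatrix_apply, hQHQ]
    simp [Matrix.fromBlocks_apply₁₁, Matrix.add_apply, Matrix.sub_apply, Matrix.smul_apply,
      smul_eq_mul]
  have hCeq : C = (1/4 : ℂ) • N := by
    ext j k
    rw [hC j k, Matrix.smul_apply, hNentry, smul_eq_mul]
    rw [hA', hB', hC', hD']
    simp [Matrix.map_apply, Matrix.toBlocks₁₁, Matrix.toBlocks₁₂, Matrix.toBlocks₂₁,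
      Matrix.toBlocks₂₂]
    ring
  have h4 : (1/4 : ℂ) • N = ((1/2 : ℂ) • (1 : Matrix (Fin n) (Fin n) ℂ))ᴴ * N *
      ((1/2 : ℂ) • 1) := by
    rw [Matrix.conjTranspose_smul, Matrix.conjTranspose_one]
    rw [Matrix.smul_mul, Matrix.mul_smul, Matrix.smul_mul, Matrix.one_mul, Matrix.mul_one,
      smul_smul]
    norm_num
  rw [hCeq, h4]
  exact hNpsd.conjTranspose_mul_mul_same _

theorem stmt_15 (n : ℕ) (v : (Fin n → ℂ) → ℝ) (x : Fin n → ℂ)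
    (hv : ContDiff ℝ 2 v)
    (H : Matrix (Fin n ⊕ Fin n) (Fin n ⊕ Fin n) ℝ)
    (hH : ∀ a b : Fin n ⊕ Fin n, H a b =
      iteratedFDeriv ℝ 2 v x
        ![Sum.elim (fun j => Pi.single j (1 : ℂ)) (fun j => Pi.single j Complex.I) a,
          Sum.elim (fun j => Pi.single j (1 : ℂ)) (fun j => Pi.single j Complex.I) b])
    (C : Matrix (Fin n) (Fin n) ℂ)
    (hC : ∀ j k : Fin n, C j k = (1 / 4 : ℂ) *
      (((H (Sum.inl j) (Sum.inl k) + H (Sum.inr j) (Sum.inr k) : ℝ) : ℂ) +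
        Complex.I * (((H (Sum.inl j) (Sum.inr k) : ℝ) : ℂ) -
          ((H (Sum.inr j) (Sum.inl k) : ℝ) : ℂ))))
    (hpos : H.PosSemidef) :
    C.PosSemidef ∧ H.det ≤ 2 ^ (2 * n) * (C.det.re) ^ 2 := by
  have hCpsd : C.PosSemidef := aux_cpsd H hpos C hC
  refine ⟨hCpsd, ?_⟩
  set J : Matrix (Fin n ⊕ Fin n) (Fin n ⊕ Fin n) ℝ := fromBlocks 0 (-1) 1 0 with hJ
  have hJT : Jᵀ = fromBlocks 0 1 (-1) 0 := by
    rw [hJ, fromBlocks_transpose]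
    simp
  set G := Jᵀ * H * J with hGdef
  have hGpsd : G.PosSemidef := by
    have h := hpos.conjTranspose_mul_mul_same J
    have hJH : Jᴴ = Jᵀ := by
      ext i j
      simp [Matrix.conjTranspose_apply]
    rwa [hJH] at h
  have hJJ : Jᵀ * J = 1 := by
    rw [hJT, hJ, fromBlocks_multiply]
    simp [← fromBlocks_one]
  have hdetG : G.det = H.det := by
    have h1 : Jᵀ.det * J.det = 1 := by rw [← det_mul, hJJ, det_one]
    rw [hGdef, det_mul, det_mul]
    linear_combination H.det * h1
  set E := (1/2 : ℝ) • (H.toBlocks₁₁ + H.toBlocks₂₂) with hE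
  set F := (1/2 : ℝ) • (H.toBlocks₁₂ - H.toBlocks₂₁) with hF
  have hG : G = fromBlocks H.toBlocks₂₂ (-H.toBlocks₂₁) (-H.toBlocks₁₂) H.toBlocks₁₁ := by
    rw [hGdef]
    conv_lhs => rw [← fromBlocks_toBlocks H]
    rw [hJT, hJ, fromBlocks_multiply, fromBlocks_multiply]
    simp
  have hS : (1/2 : ℝ) • (H + G) = fromBlocks E F (-F) E := by
    rw [hG]
    nth_rewrite 1 [← fromBlocks_toBlocks H]
    rw [fromBlocks_add, fromBlocks_smul, Matrix.fromBlocks_inj]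
    refine ⟨by module, by module, by module, by module⟩
  -- determinant of S
  set r := C.det.re with hr
  have hCreal : C.det = ((r : ℝ) : ℂ) := by
    have h1 : C.det = ((∏ i, hCpsd.1.eigenvalues i : ℝ) : ℂ) := by
      rw [hCpsd.1.det_eq_prod_eigenvalues]
      push_cast
      rfl
    have h2 : C.det.re = ∏ i, hCpsd.1.eigenvalues i := by rw [h1, Complex.ofReal_re]
    rw [h1, hr, h2]
  have hZC : E.map (fun t => (t : ℂ)) + Complex.I • F.map (fun t => (t : ℂ)) = (2 : ℂ) • C := by
    ext j k
    rw [Matrix.add_apply, Matrix.smul_apply, Matrix.smul_apply, hC j k]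
    simp [hE, hF, Matrix.map_apply, Matrix.smul_apply, Matrix.add_apply, Matrix.sub_apply,
      Matrix.toBlocks₁₁, Matrix.toBlocks₁₂, Matrix.toBlocks₂₁, Matrix.toBlocks₂₂, smul_eq_mul]
    push_cast
    ring
  have hdetS : ((1/2 : ℝ) • (H + G)).det = 2 ^ (2 * n) * r ^ 2 := by
    have hcx := aux_detblock E F
    rw [hZC] at hcx
    rw [det_smul, hCreal] at hcx
    have : (((fromBlocks E F (-F) E).det : ℝ) : ℂ) = (((2 : ℝ) ^ (2 * n) * r ^ 2 : ℝ) : ℂ) := by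
      rw [hcx]
      simp only [Fintype.card_fin, _root_.map_mul, map_pow, Complex.conj_ofReal, map_ofNat]
      push_cast
      ring
    have h2 := Complex.ofReal_injective this
    rw [hS, h2]
  have mink := aux_mink hpos hGpsd
  rw [hdetG, hdetS] at mink
  have hHd : 0 ≤ H.det := aux_det_nonneg hpos
  have hRHS : (0:ℝ) ≤ 2 ^ (2 * n) * r ^ 2 := by positivity
  nlinarith [mink, hHd, hRHS]
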